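/- arXiv:1403.6930 — 3 statements merged into one kernel-verified Lean document; each statement's English description precedes it below -/
import Mathlib

section
/- Let k be an algebraically closed field of characteristic zero, let R and B be affine domains over k with an injective k-algebra map R → B, and let D be an R-derivation of B. Then there exist a subfield k₀ of k that is a finitely generated field extension of ℚ, finitely generated k₀-subalgebras B₀ ⊆ B and R₀ ⊆ R with the image of R₀ under R → B contained in B₀, such that: (1) the multiplication maps B₀ ⊗_{k₀} k → B and R₀ ⊗_{k₀} k → R are k-algebra isomorphisms; (2) D(B₀) ⊆ B₀ and the restriction D₀ := D|_{B₀} is an R₀-derivation of B₀; and (3) D₀ is locally nilpotent if and only if D is locally nilpotent. -/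
open MvPolynomial

section helpers

variable {k : Type*} [Field k] (k₀ : Subfield k) {σ : Type*}

/-- The set of multivariate polynomials all of whose coefficients lie in the subfield `k₀`. -/
def polySub : Set (MvPolynomial σ k) := {p | ∀ α, coeff α p ∈ k₀}

theorem polySub_zero : (0 : MvPolynomial σ k) ∈ polySub k₀ := fun α => by
  rw [coeff_zero]; exact zero_mem _

theorem polySub_one : (1 : MvPolynomial σ k) ∈ polySub k₀ := fun α => by
  classical
  rw [show (1 : MvPolynomial σ k) = C 1 from rfl, coeff_C]
  split <;> [exact one_mem _; exact zero_mem _]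

theorem polySub_add {p q : MvPolynomial σ k} (hp : p ∈ polySub k₀) (hq : q ∈ polySub k₀) :
    p + q ∈ polySub k₀ := fun α => by rw [coeff_add]; exact add_mem (hp α) (hq α)

theorem polySub_neg {p : MvPolynomial σ k} (hp : p ∈ polySub k₀) : -p ∈ polySub k₀ := fun α => by
  rw [coeff_neg]; exact neg_mem (hp α)

theorem polySub_sub {p q : MvPolynomial σ k} (hp : p ∈ polySub k₀) (hq : q ∈ polySub k₀) :
    p - q ∈ polySub k₀ := by
  rw [sub_eq_add_neg]; exact polySub_add k₀ hp (polySub_neg k₀ hq)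

theorem polySub_mul {p q : MvPolynomial σ k} (hp : p ∈ polySub k₀) (hq : q ∈ polySub k₀) :
    p * q ∈ polySub k₀ := fun α => by
  classical
  rw [coeff_mul]
  exact sum_mem fun x _ => mul_mem (hp x.1) (hq x.2)

theorem polySub_C {c : k} (hc : c ∈ k₀) : (C c : MvPolynomial σ k) ∈ polySub k₀ := fun α => by
  classical
  rw [coeff_C]; split <;> [exact hc; exact zero_mem _]

theorem polySub_X (i : σ) : (X i : MvPolynomial σ k) ∈ polySub k₀ := fun α => by
  classical
  rw [show (X i : MvPolynomial σ k) = monomial (Finsupp.single i 1) 1 from rfl, coeff_monomial]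
  split <;> [exact one_mem _; exact zero_mem _]

theorem polySub_ksmul {c : k} (hc : c ∈ k₀) {p : MvPolynomial σ k} (hp : p ∈ polySub k₀) :
    c • p ∈ polySub k₀ := fun α => by
  rw [coeff_smul, smul_eq_mul]; exact mul_mem hc (hp α)

theorem polySub_sum {ι : Type*} (s : Finset ι) {g : ι → MvPolynomial σ k}
    (hg : ∀ i ∈ s, g i ∈ polySub k₀) : (∑ i ∈ s, g i) ∈ polySub k₀ := fun α => by
  rw [coeff_sum]
  exact sum_mem fun i hi => hg i hi α

theorem ker_sub_span {I : Ideal (MvPolynomial σ k)} {G : Set (MvPolynomial σ k)}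
    (hspan : Ideal.span G = I) (hG : G ⊆ polySub k₀) :
    (I : Set (MvPolynomial σ k)) ⊆
      ↑(Submodule.span k ((I : Set (MvPolynomial σ k)) ∩ polySub k₀)) := by
  intro z hz
  set T := Submodule.span k ((I : Set (MvPolynomial σ k)) ∩ polySub k₀) with hT
  have hXmul : ∀ (i : σ) (x : MvPolynomial σ k), x ∈ T → X i * x ∈ T := by
    intro i x hx
    induction hx using Submodule.span_induction with
    | mem g hg =>
        exact Submodule.subset_span ⟨I.mul_mem_left _ hg.1, polySub_mul k₀ (polySub_X k₀ i) hg.2⟩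
    | zero => rw [mul_zero]; exact zero_mem _
    | add a b _ _ iha ihb => rw [mul_add]; exact add_mem iha ihb
    | smul a x _ ih => rw [mul_smul_comm]; exact Submodule.smul_mem _ _ ih
  have hmul : ∀ (p : MvPolynomial σ k), ∀ x ∈ T, p * x ∈ T := by
    intro p
    induction p using MvPolynomial.induction_on with
    | C a => intro x hx; rw [← smul_eq_C_mul]; exact Submodule.smul_mem _ _ hx
    | add p q hp hq => intro x hx; rw [add_mul]; exact add_mem (hp x hx) (hq x hx)
    | mul_X p i hp => intro x hx; rw [mul_assoc]; exact hp _ (hXmul i x hx)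
  have hz' : z ∈ Submodule.span (MvPolynomial σ k) G := by
    show z ∈ Ideal.span G
    rw [hspan]; exact hz
  clear hz
  show z ∈ T
  induction hz' using Submodule.span_induction with
  | mem g hg => exact Submodule.subset_span ⟨hspan ▸ Ideal.subset_span hg, hG hg⟩
  | zero => exact zero_mem _
  | add a b _ _ iha ihb => exact add_mem iha ihb
  | smul p x _ ih => rw [smul_eq_mul]; exact hmul p x ih

theorem repr_sum {ι : Type*} (E : Module.Basis ι ↥k₀ k) (u : Finset ι) (a : k)
    (h : (E.repr a).support ⊆ u) : ∑ l ∈ u, (↑(E.repr a l) : k) * E l = a := by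
  have h1 : ∑ l ∈ (E.repr a).support, (E.repr a l) • E l = a := by
    have := E.linearCombination_repr a
    rwa [Finsupp.linearCombination_apply, Finsupp.sum] at this
  calc ∑ l ∈ u, (↑(E.repr a l) : k) * E l = ∑ l ∈ u, (E.repr a l) • E l := by
        exact Finset.sum_congr rfl fun l _ => rfl
    _ = ∑ l ∈ (E.repr a).support, (E.repr a l) • E l := by
        refine (Finset.sum_subset h fun l _ hl => ?_).symm
        rw [Finsupp.notMem_support_iff.mp hl, zero_smul]
    _ = a := h1

theorem components_eq_zero {ι : Type*} (E : Module.Basis ι ↥k₀ k) (u : Finset ι)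
    (v : ι → MvPolynomial σ k) (hv : ∀ l ∈ u, v l ∈ polySub k₀)
    (h : ∑ l ∈ u, (E l : k) • v l = 0) : ∀ l ∈ u, v l = 0 := by
  classical
  intro l hl
  ext α
  rw [coeff_zero]
  have h2 : ∑ l ∈ u, coeff α (v l) * E l = 0 := by
    have := congrArg (coeff α) h
    rw [coeff_sum, coeff_zero] at this
    rw [← this]
    exact Finset.sum_congr rfl fun l _ => by rw [coeff_smul, smul_eq_mul, mul_comm]
  have h3 := linearIndependent_iff'.mp E.linearIndependent u
    (fun l => if hl : l ∈ u then (⟨coeff α (v l), hv l hl α⟩ : ↥k₀) else 0) ?_ l hl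
  · simp only [dif_pos hl] at h3
    exact congrArg (Subtype.val) h3
  · rw [← h2]
    refine Finset.sum_congr rfl fun l hl => ?_
    simp only [dif_pos hl]
    rfl

theorem indep_lift {A : Type*} [CommRing A] [Algebra k A] (φ : MvPolynomial σ k →ₐ[k] A)
    (G : Finset (MvPolynomial σ k))
    (hGspan : Ideal.span (↑G : Set (MvPolynomial σ k)) = RingHom.ker φ)
    (hG : (↑G : Set (MvPolynomial σ k)) ⊆ polySub k₀)
    {n : ℕ} {f : Fin n → A} (hf : ∀ i, ∃ p ∈ polySub (σ := σ) k₀, φ p = f i)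
    (h0 : ∀ c : Fin n → k, (∀ i, c i ∈ k₀) → ∑ i, c i • f i = 0 → ∀ i, c i = 0)
    (c : Fin n → k) (hc : ∑ i, c i • f i = 0) : ∀ i, c i = 0 := by
  classical
  choose F hF hφF using hf
  set z : MvPolynomial σ k := ∑ i, c i • F i with hz
  have hzker : z ∈ RingHom.ker φ := by
    rw [RingHom.mem_ker, hz, map_sum]
    simp_rw [map_smul, hφF]
    exact hc
  have hzspan := ker_sub_span k₀ hGspan hG hzker
  obtain ⟨N, t, x, hsum⟩ := Submodule.mem_span_set'.mp hzspan
  let E := Module.Basis.ofVectorSpace ↥k₀ k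
  let u : Finset (Module.Basis.ofVectorSpaceIndex ↥k₀ k) :=
    (Finset.univ.biUnion fun j : Fin N => (E.repr (t j)).support) ∪
      (Finset.univ.biUnion fun i : Fin n => (E.repr (c i)).support)
  have hut : ∀ j, (E.repr (t j)).support ⊆ u := fun j => subset_trans
    (Finset.subset_biUnion_of_mem (fun j : Fin N => (E.repr (t j)).support) (Finset.mem_univ j))
    Finset.subset_union_left
  have huc : ∀ i, (E.repr (c i)).support ⊆ u := fun i => subset_trans
    (Finset.subset_biUnion_of_mem (fun i : Fin n => (E.repr (c i)).support) (Finset.mem_univ i))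
    Finset.subset_union_right
  set w : _ → MvPolynomial σ k :=
    fun l => ∑ j, (↑(E.repr (t j) l) : k) • (x j : MvPolynomial σ k) with hw
  set v : _ → MvPolynomial σ k :=
    fun l => (∑ i, (↑(E.repr (c i) l) : k) • F i) - w l with hv
  have hgen : ∀ (M : ℕ) (g : Fin M → k) (y : Fin M → MvPolynomial σ k),
      (∀ j, (E.repr (g j)).support ⊆ u) →
      ∑ l ∈ u, (E l : k) • ∑ j, (↑(E.repr (g j) l) : k) • y j = ∑ j, g j • y j := by
    intro M g y hg
    calc ∑ l ∈ u, (E l : k) • ∑ j, (↑(E.repr (g j) l) : k) • y j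
        = ∑ l ∈ u, ∑ j, ((↑(E.repr (g j) l) : k) * E l) • y j := by
          refine Finset.sum_congr rfl fun l _ => ?_
          rw [Finset.smul_sum]
          exact Finset.sum_congr rfl fun j _ => by rw [smul_smul, mul_comm]
      _ = ∑ j, ∑ l ∈ u, ((↑(E.repr (g j) l) : k) * E l) • y j := Finset.sum_comm
      _ = ∑ j, g j • y j := Finset.sum_congr rfl fun j _ => by
          rw [← Finset.sum_smul, repr_sum k₀ E u _ (hg j)]
  have hkey : ∑ l ∈ u, (E l : k) • v l = 0 := by
    have h1 : ∑ l ∈ u, (E l : k) • w l = z := by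
      rw [hw, hgen N t (fun j => (x j : MvPolynomial σ k)) hut, hsum]
    have h2 : ∑ l ∈ u, (E l : k) • (∑ i, (↑(E.repr (c i) l) : k) • F i) = z := by
      rw [hgen n c F huc, hz]
    simp only [hv, smul_sub]
    rw [Finset.sum_sub_distrib, h1, h2, sub_self]
  have hv0 := components_eq_zero k₀ E u v (fun l _ => by
    refine polySub_sub k₀ (polySub_sum k₀ _ fun i _ => ?_) (polySub_sum k₀ _ fun j _ => ?_)
    · exact polySub_ksmul k₀ (SetLike.coe_mem _) (hF i)
    · exact polySub_ksmul k₀ (SetLike.coe_mem _) (x j).2.2) hkey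
  intro i
  rw [← repr_sum k₀ E u (c i) (huc i)]
  refine Finset.sum_eq_zero fun l hl => ?_
  have hvl := hv0 l hl
  have heq : (∑ i, (↑(E.repr (c i) l) : k) • F i) = w l := by
    rwa [hv, sub_eq_zero] at hvl
  have hwker : w l ∈ RingHom.ker φ := by
    rw [hw]
    refine sum_mem fun j _ => ?_
    rw [smul_eq_C_mul]
    exact Ideal.mul_mem_left _ _ (x j).2.1
  have hφ0 : φ (∑ i, (↑(E.repr (c i) l) : k) • F i) = 0 := by
    rw [heq]; exact hwker
  have h4 : ∑ i', (↑(E.repr (c i') l) : k) • f i' = 0 := by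
    rw [← hφ0, map_sum]
    exact Finset.sum_congr rfl fun i' _ => by rw [map_smul, hφF]
  have h5 := h0 _ (fun i' => SetLike.coe_mem _) h4 i
  rw [h5, zero_mul]

theorem span_top {A : Type*} [CommRing A] [Algebra k A] (φ : MvPolynomial σ k →ₐ[k] A)
    (hφ : Function.Surjective φ) (A₀ : Subring A) (hX : ∀ i, φ (X i) ∈ A₀) :
    Submodule.span k (A₀ : Set A) = ⊤ := by
  set T := Submodule.span k (A₀ : Set A) with hT
  have hb : ∀ b ∈ A₀, ∀ y ∈ T, b * y ∈ T := by
    intro b hb y hy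
    induction hy using Submodule.span_induction with
    | mem x hx => exact Submodule.subset_span (mul_mem hb hx)
    | zero => rw [mul_zero]; exact zero_mem _
    | add a b' _ _ iha ihb => rw [mul_add]; exact add_mem iha ihb
    | smul a x _ ih => rw [mul_smul_comm]; exact Submodule.smul_mem _ _ ih
  have hmulT : ∀ x ∈ T, ∀ y ∈ T, x * y ∈ T := by
    intro x hx
    induction hx using Submodule.span_induction with
    | mem b hb' => exact hb b hb'
    | zero => intro y hy; rw [zero_mul]; exact zero_mem _
    | add a b' _ _ iha ihb => intro y hy; rw [add_mul]; exact add_mem (iha y hy) (ihb y hy)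
    | smul a x _ ih => intro y hy; rw [smul_mul_assoc]; exact Submodule.smul_mem _ _ (ih y hy)
  rw [eq_top_iff]
  rintro a -
  obtain ⟨p, rfl⟩ := hφ a
  induction p using MvPolynomial.induction_on with
  | C a =>
      rw [show φ (C a) = algebraMap k A a from φ.commutes a, Algebra.algebraMap_eq_smul_one]
      exact Submodule.smul_mem _ _ (Submodule.subset_span (one_mem A₀))
  | add p q hp hq => rw [map_add]; exact add_mem hp hq
  | mul_X p i hp => rw [map_mul]; exact hmulT _ hp _ (Submodule.subset_span (hX i))

theorem closure_eq_image {A : Type*} [CommRing A] [Algebra k A]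
    (φ : MvPolynomial σ k →ₐ[k] A) :
    (Subring.closure ((algebraMap k A '' ↑k₀) ∪ (Set.range fun i : σ => φ (X i))) : Set A)
      = ⇑φ '' polySub k₀ := by
  apply Set.Subset.antisymm
  · have hsr : ∀ a ∈ Subring.closure ((algebraMap k A '' ↑k₀) ∪ (Set.range fun i : σ => φ (X i))),
        a ∈ ⇑φ '' polySub k₀ := by
      intro a ha
      induction ha using Subring.closure_induction with
      | mem x hx =>
          rcases hx with ⟨cc, hcc, rfl⟩ | ⟨i, rfl⟩
          · exact ⟨C cc, polySub_C k₀ hcc, φ.commutes cc⟩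
          · exact ⟨X i, polySub_X k₀ i, rfl⟩
      | zero => exact ⟨0, polySub_zero k₀, map_zero φ⟩
      | one => exact ⟨1, polySub_one k₀, map_one φ⟩
      | add x y _ _ ihx ihy =>
          obtain ⟨p, hp, rfl⟩ := ihx; obtain ⟨q, hq, rfl⟩ := ihy
          exact ⟨p + q, polySub_add k₀ hp hq, map_add φ p q⟩
      | neg x _ ih =>
          obtain ⟨p, hp, rfl⟩ := ih
          exact ⟨-p, polySub_neg k₀ hp, map_neg φ p⟩
      | mul x y _ _ ihx ihy =>
          obtain ⟨p, hp, rfl⟩ := ihx; obtain ⟨q, hq, rfl⟩ := ihy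
          exact ⟨p * q, polySub_mul k₀ hp hq, map_mul φ p q⟩
    exact hsr
  · rintro a ⟨p, hp, rfl⟩
    rw [as_sum p, map_sum]
    refine sum_mem fun α hα => ?_
    rw [monomial_eq, map_mul, show φ (C (coeff α p)) = algebraMap k A (coeff α p) from φ.commutes _]
    refine mul_mem (Subring.subset_closure (Or.inl ⟨_, hp α, rfl⟩)) ?_
    simp only [Finsupp.prod, map_prod, map_pow]
    refine prod_mem fun i _ => pow_mem ?_ _
    exact Subring.subset_closure (Or.inr ⟨i, rfl⟩)

theorem coeff_mem_closure {S : Finset k} (p : MvPolynomial σ k)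
    (h : ∀ α ∈ p.support, coeff α p ∈ S) : p ∈ polySub (Subfield.closure (↑S : Set k)) := by
  intro α
  by_cases hα : coeff α p = 0
  · rw [hα]; exact zero_mem _
  · exact Subfield.subset_closure (h α (mem_support_iff.mpr hα))

theorem D_mem_closure {R B : Type*} [CommRing R] [CommRing B] [Algebra R B]
    (D : Derivation R B B) (S : Set B) (hS : ∀ x ∈ S, D x ∈ Subring.closure S) :
    ∀ b ∈ Subring.closure S, D b ∈ Subring.closure S := by
  intro b hb
  induction hb using Subring.closure_induction with
  | mem x hx => exact hS x hx
  | zero => rw [map_zero]; exact zero_mem _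
  | one => rw [Derivation.map_one_eq_zero]; exact zero_mem _
  | add x y _ _ ihx ihy => rw [map_add]; exact add_mem ihx ihy
  | neg x _ ih => rw [map_neg]; exact neg_mem ih
  | mul x y hx hy ihx ihy =>
      rw [Derivation.leibniz, smul_eq_mul, smul_eq_mul]
      exact add_mem (mul_mem hx ihy) (mul_mem hy ihx)

end helpers


/-- **Lemma 1.2**: an injective map of affine domains `R → B` over an algebraically closed
field `k` of characteristic zero, together with an `R`-derivation `D` of `B`, descends to
a subfield `k₀` of `k` finitely generated over `ℚ` (the prime field): there are finitely
generated `k₀`-subalgebras `B₀ ⊆ B` and `R₀ ⊆ R` with `R₀` mapping into `B₀` such that the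
multiplication maps `B₀ ⊗_{k₀} k → B` and `R₀ ⊗_{k₀} k → R` are isomorphisms (expressed by
spanning and preservation of linear independence), `D` restricts to an `R₀`-derivation `D₀`
of `B₀`, and `D₀` is locally nilpotent iff `D` is. -/
theorem exists_finitelyGenerated_subfield_model
    (k : Type*) [Field k] [IsAlgClosed k] [CharZero k]
    (R B : Type*) [CommRing R] [IsDomain R] [Algebra k R] [Algebra.FiniteType k R]
    [CommRing B] [IsDomain B] [Algebra k B] [Algebra.FiniteType k B]
    [Algebra R B] [IsScalarTower k R B]
    (hinj : Function.Injective (algebraMap R B))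
    (D : Derivation R B B) :
    ∃ (k₀ : Subfield k) (B₀ : Subring B) (R₀ : Subring R),
      -- `k₀` is a finitely generated field extension of the prime field `ℚ`
      (∃ S : Finset k, k₀ = Subfield.closure (↑S : Set k)) ∧
      -- `B₀` is a finitely generated `k₀`-subalgebra of `B`
      (∃ s : Finset B,
        B₀ = Subring.closure ((algebraMap k B '' (k₀ : Set k)) ∪ (↑s : Set B))) ∧
      -- `R₀` is a finitely generated `k₀`-subalgebra of `R`
      (∃ s : Finset R,
        R₀ = Subring.closure ((algebraMap k R '' (k₀ : Set k)) ∪ (↑s : Set R))) ∧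
      -- the image of `R₀` under `R → B` is contained in `B₀`
      (∀ r ∈ R₀, algebraMap R B r ∈ B₀) ∧
      -- (1) the multiplication map `B₀ ⊗_{k₀} k → B` is a `k`-algebra isomorphism:
      -- it is surjective (`B₀` spans `B` over `k`) ...
      Submodule.span k (B₀ : Set B) = ⊤ ∧
      -- ... and injective (`k₀`-linearly independent families in `B₀` remain
      -- `k`-linearly independent in `B`)
      (∀ (n : ℕ) (f : Fin n → B), (∀ i, f i ∈ B₀) →
        (∀ c : Fin n → k, (∀ i, c i ∈ k₀) → (∑ i, c i • f i) = 0 → ∀ i, c i = 0) →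
        (∀ c : Fin n → k, (∑ i, c i • f i) = 0 → ∀ i, c i = 0)) ∧
      -- and likewise the multiplication map `R₀ ⊗_{k₀} k → R` is an isomorphism
      Submodule.span k (R₀ : Set R) = ⊤ ∧
      (∀ (n : ℕ) (f : Fin n → R), (∀ i, f i ∈ R₀) →
        (∀ c : Fin n → k, (∀ i, c i ∈ k₀) → (∑ i, c i • f i) = 0 → ∀ i, c i = 0) →
        (∀ c : Fin n → k, (∑ i, c i • f i) = 0 → ∀ i, c i = 0)) ∧
      -- (2) `D` restricts to a derivation `D₀` of `B₀` (which is automatically an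
      -- `R₀`-derivation since `D` kills the image of `R ⊇ R₀`)
      (∀ b ∈ B₀, D b ∈ B₀) ∧
      -- (3) `D₀ = D|_{B₀}` is locally nilpotent iff `D` is locally nilpotent
      ((∀ b ∈ B₀, ∃ n : ℕ, 1 ≤ n ∧ (⇑D)^[n] b = 0) ↔
        (∀ b : B, ∃ n : ℕ, 1 ≤ n ∧ (⇑D)^[n] b = 0)) := by
  classical
  obtain ⟨σB, hfinB, φ, hφ⟩ :=
    Algebra.FiniteType.iff_quotient_mvPolynomial'.mp (inferInstance : Algebra.FiniteType k B)
  obtain ⟨σR, hfinR, ψ, hψ⟩ :=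
    Algebra.FiniteType.iff_quotient_mvPolynomial'.mp (inferInstance : Algebra.FiniteType k R)
  obtain ⟨GB, hGB⟩ := IsNoetherian.noetherian (RingHom.ker (φ : MvPolynomial σB k →ₐ[k] B))
  obtain ⟨GR, hGR⟩ := IsNoetherian.noetherian (RingHom.ker (ψ : MvPolynomial σR k →ₐ[k] R))
  have hdex : ∀ i : σB, ∃ p, φ p = D (φ (X i)) := fun i => hφ _
  choose d hd using hdex
  have hqex : ∀ j : σR, ∃ p, φ p = algebraMap R B (ψ (X j)) := fun j => hφ _
  choose q hq using hqex
  set S : Finset k :=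
    ((GB.biUnion fun g => g.support.image fun α => coeff α g) ∪
     (GR.biUnion fun g => g.support.image fun α => coeff α g) ∪
     (Finset.univ.biUnion fun i : σB => (d i).support.image fun α => coeff α (d i)) ∪
     (Finset.univ.biUnion fun j : σR => (q j).support.image fun α => coeff α (q j))) with hSdef
  set k₀ : Subfield k := Subfield.closure (↑S : Set k) with hk₀def
  have hGBF0 : (↑GB : Set (MvPolynomial σB k)) ⊆ polySub k₀ := by
    intro g hg
    refine coeff_mem_closure g fun α hα => ?_
    refine Finset.mem_union_left _ (Finset.mem_union_left _ (Finset.mem_union_left _ ?_))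
    exact Finset.mem_biUnion.mpr ⟨g, hg, Finset.mem_image_of_mem _ hα⟩
  have hGRF0 : (↑GR : Set (MvPolynomial σR k)) ⊆ polySub k₀ := by
    intro g hg
    refine coeff_mem_closure g fun α hα => ?_
    refine Finset.mem_union_left _ (Finset.mem_union_left _ (Finset.mem_union_right _ ?_))
    exact Finset.mem_biUnion.mpr ⟨g, hg, Finset.mem_image_of_mem _ hα⟩
  have hdF0 : ∀ i : σB, d i ∈ polySub k₀ := by
    intro i
    refine coeff_mem_closure (d i) fun α hα => ?_
    refine Finset.mem_union_left _ (Finset.mem_union_right _ ?_)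
    exact Finset.mem_biUnion.mpr ⟨i, Finset.mem_univ i, Finset.mem_image_of_mem _ hα⟩
  have hqF0 : ∀ j : σR, q j ∈ polySub k₀ := by
    intro j
    refine coeff_mem_closure (q j) fun α hα => ?_
    refine Finset.mem_union_right _ ?_
    exact Finset.mem_biUnion.mpr ⟨j, Finset.mem_univ j, Finset.mem_image_of_mem _ hα⟩
  set sB : Finset B := Finset.univ.image fun i : σB => φ (X i) with hsBdef
  set sR : Finset R := Finset.univ.image fun j : σR => ψ (X j) with hsRdef
  have hsB : (↑sB : Set B) = Set.range fun i : σB => φ (X i) := by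
    rw [hsBdef, Finset.coe_image, Finset.coe_univ, Set.image_univ]
  have hsR : (↑sR : Set R) = Set.range fun j : σR => ψ (X j) := by
    rw [hsRdef, Finset.coe_image, Finset.coe_univ, Set.image_univ]
  set B₀ : Subring B := Subring.closure ((algebraMap k B '' ↑k₀) ∪ (↑sB : Set B)) with hB₀def
  set R₀ : Subring R := Subring.closure ((algebraMap k R '' ↑k₀) ∪ (↑sR : Set R)) with hR₀def
  have hB₀img : (B₀ : Set B) = ⇑φ '' polySub k₀ := by
    rw [hB₀def, hsB]; exact closure_eq_image k₀ φ
  have hR₀img : (R₀ : Set R) = ⇑ψ '' polySub k₀ := by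
    rw [hR₀def, hsR]; exact closure_eq_image k₀ ψ
  have hB₀mem : ∀ b : B, b ∈ B₀ ↔ ∃ p ∈ polySub (σ := σB) k₀, φ p = b := by
    intro b; rw [← SetLike.mem_coe, hB₀img]; exact Set.mem_image _ _ _
  have hR₀mem : ∀ r : R, r ∈ R₀ ↔ ∃ p ∈ polySub (σ := σR) k₀, ψ p = r := by
    intro r; rw [← SetLike.mem_coe, hR₀img]; exact Set.mem_image _ _ _
  have hXB₀ : ∀ i : σB, φ (X i) ∈ B₀ := fun i => by
    rw [hB₀def]
    exact Subring.subset_closure (Or.inr (Finset.mem_coe.mpr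
      (Finset.mem_image_of_mem _ (Finset.mem_univ i))))
  have hXR₀ : ∀ j : σR, ψ (X j) ∈ R₀ := fun j => by
    rw [hR₀def]
    exact Subring.subset_closure (Or.inr (Finset.mem_coe.mpr
      (Finset.mem_image_of_mem _ (Finset.mem_univ j))))
  -- span statements
  have hspanB : Submodule.span k (B₀ : Set B) = ⊤ := span_top φ hφ B₀ hXB₀
  have hspanR : Submodule.span k (R₀ : Set R) = ⊤ := span_top ψ hψ R₀ hXR₀
  -- D restricts to B₀
  have hDB₀ : ∀ b ∈ B₀, D b ∈ B₀ := by
    rw [hB₀def]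
    refine D_mem_closure D _ ?_
    rintro x (⟨cc, hcc, rfl⟩ | hx)
    · have h0 : D (algebraMap k B cc) = 0 := by
        rw [IsScalarTower.algebraMap_apply k R B, Derivation.map_algebraMap]
      rw [h0]; exact zero_mem _
    · rw [hsB] at hx
      obtain ⟨i, rfl⟩ := hx
      rw [← hd i]
      have : φ (d i) ∈ B₀ := (hB₀mem _).mpr ⟨d i, hdF0 i, rfl⟩
      rwa [hB₀def] at this
  -- R₀ maps into B₀
  have hR₀B₀ : ∀ r ∈ R₀, algebraMap R B r ∈ B₀ := by
    intro r hr
    have hmap : R₀.map (algebraMap R B) ≤ B₀ := by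
      rw [hR₀def, RingHom.map_closure]
      refine Subring.closure_le.mpr ?_
      rw [Set.image_union]
      refine Set.union_subset ?_ ?_
      · rintro b ⟨a, ⟨cc, hcc, rfl⟩, rfl⟩
        show algebraMap R B (algebraMap k R cc) ∈ B₀
        rw [← IsScalarTower.algebraMap_apply k R B]
        rw [hB₀def]
        exact Subring.subset_closure (Or.inl ⟨cc, hcc, rfl⟩)
      · rintro b ⟨a, ha, rfl⟩
        rw [hsR] at ha
        obtain ⟨j, rfl⟩ := ha
        show algebraMap R B (ψ (X j)) ∈ B₀
        rw [← hq j]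
        exact (hB₀mem _).mpr ⟨q j, hqF0 j, rfl⟩
    exact hmap (Subring.mem_map.mpr ⟨r, hr, rfl⟩)
  -- independence
  have hindepB : ∀ (n : ℕ) (f : Fin n → B), (∀ i, f i ∈ B₀) →
      (∀ c : Fin n → k, (∀ i, c i ∈ k₀) → (∑ i, c i • f i) = 0 → ∀ i, c i = 0) →
      (∀ c : Fin n → k, (∑ i, c i • f i) = 0 → ∀ i, c i = 0) := by
    intro n f hf hind c hc
    exact indep_lift k₀ φ GB hGB hGBF0 (fun i => (hB₀mem (f i)).mp (hf i)) hind c hc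
  have hindepR : ∀ (n : ℕ) (f : Fin n → R), (∀ i, f i ∈ R₀) →
      (∀ c : Fin n → k, (∀ i, c i ∈ k₀) → (∑ i, c i • f i) = 0 → ∀ i, c i = 0) →
      (∀ c : Fin n → k, (∑ i, c i • f i) = 0 → ∀ i, c i = 0) := by
    intro n f hf hind c hc
    exact indep_lift k₀ ψ GR hGR hGRF0 (fun i => (hR₀mem (f i)).mp (hf i)) hind c hc
  -- local nilpotency transfer
  have hit0 : ∀ m : ℕ, (⇑D)^[m] (0 : B) = 0 := fun m => Function.iterate_fixed (map_zero D) m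
  have hiter_add : ∀ (m : ℕ) (x y : B), (⇑D)^[m] (x + y) = (⇑D)^[m] x + (⇑D)^[m] y := by
    intro m
    induction m with
    | zero => intro x y; simp
    | succ m ih =>
        intro x y
        rw [Function.iterate_succ_apply, Function.iterate_succ_apply,
          Function.iterate_succ_apply, map_add, ih]
  have hDsmul : ∀ (a : k) (x : B), D (a • x) = a • D x := by
    intro a x
    rw [← algebraMap_smul R a x, D.map_smul, algebraMap_smul]
  have hiter_smul : ∀ (m : ℕ) (a : k) (x : B), (⇑D)^[m] (a • x) = a • (⇑D)^[m] x := by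
    intro m
    induction m with
    | zero => intro a x; simp
    | succ m ih =>
        intro a x
        rw [Function.iterate_succ_apply, Function.iterate_succ_apply, hDsmul, ih]
  have hiter_ge : ∀ {m : ℕ} {x : B}, (⇑D)^[m] x = 0 → ∀ M, m ≤ M → (⇑D)^[M] x = 0 := by
    intro m x hx M hM
    rw [← Nat.sub_add_cancel hM, Function.iterate_add_apply, hx, hit0]
  have hnil : (∀ b ∈ B₀, ∃ n : ℕ, 1 ≤ n ∧ (⇑D)^[n] b = 0) ↔
      (∀ b : B, ∃ n : ℕ, 1 ≤ n ∧ (⇑D)^[n] b = 0) := by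
    constructor
    · intro h b
      have hb : b ∈ Submodule.span k (B₀ : Set B) := by rw [hspanB]; exact Submodule.mem_top
      induction hb using Submodule.span_induction with
      | mem x hx => exact h x hx
      | zero => exact ⟨1, le_refl 1, by simp [map_zero D]⟩
      | add x y _ _ ihx ihy =>
          obtain ⟨n1, hn1, h1⟩ := ihx
          obtain ⟨n2, hn2, h2⟩ := ihy
          refine ⟨max n1 n2, le_trans hn1 (le_max_left _ _), ?_⟩
          rw [hiter_add, hiter_ge h1 _ (le_max_left _ _), hiter_ge h2 _ (le_max_right _ _),
            add_zero]
      | smul a x _ ih =>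
          obtain ⟨n1, hn1, h1⟩ := ih
          exact ⟨n1, hn1, by rw [hiter_smul, h1, smul_zero]⟩
    · intro h b _
      exact h b
  exact ⟨k₀, B₀, R₀, ⟨S, hk₀def⟩, ⟨sB, hB₀def⟩, ⟨sR, hR₀def⟩, hR₀B₀, hspanB, hindepB,
    hspanR, hindepR, hDB₀, hnil⟩
end

section
/- Let k₁ ⊆ k be algebraically closed fields of characteristic zero. Let R₁ and B₁ be affine domains over k₁ with an injective k₁-algebra map R₁ → B₁, and let D₁ be an R₁-derivation of B₁. Set R = R₁ ⊗_{k₁} k, B = B₁ ⊗_{k₁} k, and let D = D₁ ⊗ k be the base-changed R-derivation of B. Let m₁ be a maximal ideal of R₁ and let m = m₁·R be the corresponding maximal ideal of R. If the induced derivation D_m on B/mB is locally nilpotent, then the induced derivation (D₁)_{m₁} on B₁/m₁B₁ is locally nilpotent. -/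
open scoped TensorProduct

attribute [local instance] Algebra.TensorProduct.rightAlgebra

lemma tmul_one_injective_aux (k₁ k : Type*) [Field k₁] [Field k] [Algebra k₁ k]
    (M : Type*) [AddCommGroup M] [Module k₁ M] :
    Function.Injective (fun m : M => m ⊗ₜ[k₁] (1 : k)) := by
  obtain ⟨g, hg⟩ := (Algebra.linearMap k₁ k).exists_leftInverse_of_injective
    (by rw [LinearMap.ker_eq_bot]; exact (algebraMap k₁ k).injective)
  have hg1 : g 1 = 1 := by
    have := LinearMap.congr_fun hg 1
    simpa using this
  have h : Function.LeftInverse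
      (fun x => (TensorProduct.rid k₁ M) (LinearMap.lTensor M g x))
      (fun m : M => m ⊗ₜ[k₁] (1 : k)) := by
    intro m
    simp [hg1]
  exact h.injective

/-- **Lemma 1.3 (descent of fiberwise local nilpotency along an extension of algebraically
closed fields).** Let `k₁ ⊆ k` be algebraically closed fields of characteristic zero,
`R₁ → B₁` an injective map of affine domains over `k₁`, `D₁` an `R₁`-derivation of `B₁`,
and `D` the base-changed derivation of `B = B₁ ⊗[k₁] k` (characterized by
`D (b ⊗ c) = D₁ b ⊗ c`). Let `m₁` be a maximal ideal of `R₁` and `m = m₁·R` the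
corresponding ideal of `R = R₁ ⊗[k₁] k`. If the derivation induced by `D` on `B/mB`
is locally nilpotent, then the derivation induced by `D₁` on `B₁/m₁B₁` is locally
nilpotent. -/
theorem fiberwise_locallyNilpotent_descends_along_base_field_extension
    (k₁ k : Type*) [Field k₁] [Field k] [IsAlgClosed k₁] [IsAlgClosed k]
    [CharZero k₁] [CharZero k] [Algebra k₁ k]
    (R₁ B₁ : Type*) [CommRing R₁] [IsDomain R₁] [Algebra k₁ R₁] [Algebra.FiniteType k₁ R₁]
    [CommRing B₁] [IsDomain B₁] [Algebra k₁ B₁] [Algebra.FiniteType k₁ B₁]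
    [Algebra R₁ B₁] [IsScalarTower k₁ R₁ B₁]
    (hinj : Function.Injective (algebraMap R₁ B₁))
    (D₁ : Derivation R₁ B₁ B₁)
    (D : Derivation k (B₁ ⊗[k₁] k) (B₁ ⊗[k₁] k))
    (hD : ∀ (b : B₁) (c : k), D (b ⊗ₜ[k₁] c) = (D₁ b) ⊗ₜ[k₁] c)
    (m₁ : Ideal R₁) (hm₁ : m₁.IsMaximal)
    (hLN : ∀ x : B₁ ⊗[k₁] k, ∃ n : ℕ, 1 ≤ n ∧
      (⇑D)^[n] x ∈ Ideal.map
        (Algebra.TensorProduct.map (IsScalarTower.toAlgHom k₁ R₁ B₁)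
          (AlgHom.id k₁ k)).toRingHom
        (Ideal.map (Algebra.TensorProduct.includeLeftRingHom :
          R₁ →+* R₁ ⊗[k₁] k) m₁)) :
    ∀ b : B₁, ∃ n : ℕ, 1 ≤ n ∧ (⇑D₁)^[n] b ∈ Ideal.map (algebraMap R₁ B₁) m₁ := by
  intro b
  obtain ⟨n, hn, hmem⟩ := hLN (b ⊗ₜ[k₁] (1 : k))
  refine ⟨n, hn, ?_⟩
  have key : ∀ (m : ℕ) (b : B₁), (⇑D)^[m] (b ⊗ₜ[k₁] (1 : k)) = ((⇑D₁)^[m] b) ⊗ₜ[k₁] 1 := by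
    intro m
    induction m with
    | zero => intro b; simp
    | succ m ih =>
      intro b
      rw [Function.iterate_succ_apply, hD, ih, Function.iterate_succ_apply]
  rw [key] at hmem
  set J := Ideal.map (algebraMap R₁ B₁) m₁ with hJ
  have hid : Ideal.map
      (Algebra.TensorProduct.map (IsScalarTower.toAlgHom k₁ R₁ B₁)
        (AlgHom.id k₁ k)).toRingHom
      (Ideal.map (Algebra.TensorProduct.includeLeftRingHom : R₁ →+* R₁ ⊗[k₁] k) m₁)
      = Ideal.map (Algebra.TensorProduct.includeLeftRingHom : B₁ →+* B₁ ⊗[k₁] k) J := by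
    rw [hJ, Ideal.map_map, Ideal.map_map]
    congr 1
  rw [hid] at hmem
  set x := (⇑D₁)^[n] b with hx
  let q : B₁ →ₐ[k₁] B₁ ⧸ J := Ideal.Quotient.mkₐ k₁ J
  let F := Algebra.TensorProduct.map q (AlgHom.id k₁ k)
  have hker : Ideal.map (Algebra.TensorProduct.includeLeftRingHom : B₁ →+* B₁ ⊗[k₁] k) J
      ≤ RingHom.ker F.toRingHom := by
    rw [Ideal.map_le_iff_le_comap]
    intro a ha
    simp only [Ideal.mem_comap, RingHom.mem_ker, AlgHom.toRingHom_eq_coe, RingHom.coe_coe,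
      Algebra.TensorProduct.includeLeftRingHom_apply, F, Algebra.TensorProduct.map_tmul]
    rw [show q a = 0 from by simpa [q, Ideal.Quotient.mkₐ_eq_mk, Ideal.Quotient.eq_zero_iff_mem]
      using ha]
    simp
  have hF0 : F (x ⊗ₜ[k₁] (1 : k)) = 0 := hker hmem
  have hq0 : q x ⊗ₜ[k₁] (1 : k) = (0 : (B₁ ⧸ J) ⊗[k₁] k) := by
    simpa [F, Algebra.TensorProduct.map_tmul] using hF0
  have : q x = 0 := by
    have := tmul_one_injective_aux k₁ k (B₁ ⧸ J)
    have h0 : (0 : B₁ ⧸ J) ⊗ₜ[k₁] (1 : k) = (0 : (B₁ ⧸ J) ⊗[k₁] k) := by simp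
    exact this (hq0.trans h0.symm)
  simpa [q, Ideal.Quotient.mkₐ_eq_mk, Ideal.Quotient.eq_zero_iff_mem] using this
end

section
/- Let B be a finitely generated ℂ-algebra that is an integral domain, and let (f_n)_{n ∈ ℕ} be a sequence of nonzero elements of B. Then there exists a maximal ideal m of B such that f_n ∉ m for every n ∈ ℕ. Equivalently, the set of closed points of an irreducible affine variety over ℂ cannot be covered by countably many proper Zariski-closed subsets. -/
set_option maxHeartbeats 1000000
open Cardinal

/-- The submonoid closure of a countable set is countable. -/
lemma countable_submonoid_closure {M : Type*} [Monoid M] {s : Set M} (hs : s.Countable) :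
    (Submonoid.closure s : Set M).Countable := by
  haveI := hs.to_subtype
  have hsub : (Submonoid.closure s : Set M) ⊆
      Set.range (fun l : List s => (l.map Subtype.val).prod) := by
    intro x hx
    obtain ⟨l, hl, rfl⟩ := Submonoid.exists_list_of_mem_closure hx
    refine ⟨l.attach.map fun y => ⟨y.1, hl y.1 y.2⟩, ?_⟩
    simp [List.map_map, Function.comp]
  exact (Set.countable_range _).mono hsub


/-- If a quotient of a `ℂ`-algebra of countable dimension by a maximal ideal,
then `ℂ` surjects onto the quotient. -/
lemma aux_quotient_surjective {A : Type*} [CommRing A] [Algebra ℂ A]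
    (hA : Module.rank ℂ A ≤ Cardinal.aleph0) (m' : Ideal A) [hm : m'.IsMaximal] :
    Function.Surjective ((Ideal.Quotient.mk m').comp (algebraMap ℂ A)) := by
  have hrankK : Module.rank ℂ (A ⧸ m') ≤ ℵ₀ := by
    refine le_trans ?_ hA
    exact LinearMap.rank_le_of_surjective (Ideal.Quotient.mkₐ ℂ m').toLinearMap
      (Ideal.Quotient.mkₐ_surjective ℂ m')
  letI : Field (A ⧸ m') := Ideal.Quotient.field m'
  haveI halg : Algebra.IsAlgebraic ℂ (A ⧸ m') := by
    by_contra h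
    rw [← Algebra.transcendental_iff_not_isAlgebraic] at h
    obtain ⟨x, hx⟩ := h.transcendental
    have li := hx.linearIndependent_sub_inv
    have hle := li.cardinal_lift_le_rank
    have h3 := hle.trans (Cardinal.lift_le.mpr hrankK)
    rw [Cardinal.lift_aleph0, Cardinal.lift_le_aleph0, mk_complex] at h3
    exact absurd h3 (not_le.mpr Cardinal.aleph0_lt_continuum)
  haveI : Algebra.IsIntegral ℂ (A ⧸ m') := Algebra.IsAlgebraic.isIntegral
  have hsurjC : Function.Surjective (algebraMap ℂ (A ⧸ m')) :=
    IsAlgClosed.algebraMap_bijective_of_isIntegral.2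
  have heq : algebraMap ℂ (A ⧸ m') = (Ideal.Quotient.mk m').comp (algebraMap ℂ A) := by
    rw [IsScalarTower.algebraMap_eq ℂ A (A ⧸ m'), Ideal.Quotient.algebraMap_eq]
  rwa [heq] at hsurjC

/-- The closed points of an irreducible affine variety over `ℂ` cannot be covered by
countably many proper Zariski-closed subsets: given countably many nonzero elements
`f n` of a finitely generated complex domain `B`, some maximal ideal avoids them all. -/
theorem exists_maximal_ideal_avoiding_countably_many
    (B : Type*) [CommRing B] [IsDomain B] [Algebra ℂ B] [Algebra.FiniteType ℂ B]
    (f : ℕ → B) (hf : ∀ n : ℕ, f n ≠ 0) :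
    ∃ m : Ideal B, m.IsMaximal ∧ ∀ n : ℕ, f n ∉ m := by
  classical
  -- the multiplicative set generated by the `f n`
  set S : Submonoid B := Submonoid.closure (Set.range f) with hS
  have hS0 : S ≤ nonZeroDivisors B := by
    rw [hS, Submonoid.closure_le]
    rintro _ ⟨n, rfl⟩
    exact mem_nonZeroDivisors_of_ne_zero (hf n)
  set A := Localization S with hA
  haveI : IsDomain A := IsLocalization.isDomain_localization hS0
  -- rank of `A` over ℂ is countable
  obtain ⟨g, hg⟩ := (inferInstance : Algebra.FiniteType ℂ B).out
  set M : Set B := (Submonoid.closure (g : Set B) : Set B) with hM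
  have hMc : M.Countable := countable_submonoid_closure (g : Set B).to_countable
  have hSc : (S : Set B).Countable := countable_submonoid_closure (Set.countable_range f)
  have hspanB : Submodule.span ℂ M = ⊤ := by
    have := Algebra.adjoin_eq_span ℂ (g : Set B)
    rw [hg] at this
    exact this.symm
  -- a countable spanning set of `A`
  haveI : Countable S := hSc.to_subtype
  set L : S → (B →ₗ[ℂ] A) := fun t =>
    (LinearMap.mulRight ℂ (IsLocalization.mk' A 1 t)).comp
      (IsScalarTower.toAlgHom ℂ B A).toLinearMap with hL
  set u : Set A := ⋃ t : S, (L t) '' M with hu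
  have huc : u.Countable := Set.countable_iUnion fun t => hMc.image _
  have hspanA : Submodule.span ℂ u = ⊤ := by
    rw [eq_top_iff]
    rintro a -
    obtain ⟨⟨b, t⟩, rfl⟩ := IsLocalization.mk'_surjective S a
    have hab : IsLocalization.mk' A b t = L t b := by
      rw [IsLocalization.mk'_eq_mul_mk'_one]
      rfl
    show IsLocalization.mk' A b t ∈ _
    rw [hab]
    have : L t b ∈ Submodule.span ℂ ((L t) '' M) := by
      rw [← Submodule.map_span, hspanB]
      exact ⟨b, trivial, rfl⟩
    exact Submodule.span_mono (Set.subset_iUnion (fun t => (L t) '' M) t) this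
  have hrankA : Module.rank ℂ A ≤ ℵ₀ := by
    have h1 := rank_span_le (R := ℂ) u
    rw [hspanA] at h1
    have h2 : Module.rank ℂ A = Module.rank ℂ (⊤ : Submodule ℂ A) := (rank_top ℂ A).symm
    haveI := huc.to_subtype
    exact h2.le.trans (h1.trans (Cardinal.mk_le_aleph0))
  -- pick a maximal ideal of `A`
  obtain ⟨m', hm'⟩ := Ideal.exists_maximal A
  haveI := hm'
  letI : Field (A ⧸ m') := Ideal.Quotient.field m'
  have hsurjC := aux_quotient_surjective hrankA m'
  set φ : B →+* (A ⧸ m') := (Ideal.Quotient.mk m').comp (algebraMap B A) with hφ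
  have hφsurj : Function.Surjective φ := by
    intro y
    obtain ⟨c, rfl⟩ := hsurjC y
    refine ⟨algebraMap ℂ B c, ?_⟩
    rw [hφ, RingHom.comp_apply, RingHom.comp_apply, ← IsScalarTower.algebraMap_apply ℂ B A]
  refine ⟨RingHom.ker φ, RingHom.ker_isMaximal_of_surjective φ hφsurj, fun n hn => ?_⟩
  rw [RingHom.mem_ker] at hn
  haveI : Nontrivial (A ⧸ m') := Ideal.Quotient.nontrivial_iff.mpr hm'.ne_top
  have hfnS : f n ∈ S := Submonoid.subset_closure ⟨n, rfl⟩
  have h1 : φ (f n) * (Ideal.Quotient.mk m') (IsLocalization.mk' A 1 ⟨f n, hfnS⟩) = 1 := by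
    rw [hφ, RingHom.comp_apply, ← map_mul, ← IsLocalization.mk'_eq_mul_mk'_one,
      IsLocalization.mk'_self, map_one]
  rw [hn, zero_mul] at h1
  exact zero_ne_one h1
end
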